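/- For (t₁,t₂,t₃) ∈ (−∞,0)³ define F(t₁,t₂,t₃) = (1/2) t₁t₂t₃ + ∑_{n=1}^∞ ( e^{n t₁} + e^{n t₂} + e^{n t₃} − e^{n(t₁+t₂)} − e^{n(t₁+t₃)} − e^{n(t₂+t₃)} + e^{n(t₁+t₂+t₃)} ) / n³. Then the series converges, F is three times continuously differentiable on (−∞,0)³, and its third partial derivatives are: ∂³F/∂t₁³ = e^{t₁}/(1−e^{t₁}) − e^{t₁+t₂}/(1−e^{t₁+t₂}) − e^{t₁+t₃}/(1−e^{t₁+t₃}) + e^{t₁+t₂+t₃}/(1−e^{t₁+t₂+t₃}); ∂³F/∂t₁²∂t₂ = −e^{t₁+t₂}/(1−e^{t₁+t₂}) + e^{t₁+t₂+t₃}/(1−e^{t₁+t₂+t₃}); and ∂³F/∂t₁∂t₂∂t₃ = 1/2 + e^{t₁+t₂+t₃}/(1−e^{t₁+t₂+t₃}). -/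

import Mathlib

open Real

noncomputable def gk (k : ℕ) (x : ℝ) : ℝ := ∑' n : ℕ, exp (((n : ℝ) + 1) * x) / ((n : ℝ) + 1) ^ k

lemma gk_term_le {k : ℕ} {x : ℝ} (n : ℕ) :
    exp (((n : ℝ) + 1) * x) / ((n : ℝ) + 1) ^ k ≤ exp x ^ (n + 1) := by
  have h1 : (1 : ℝ) ≤ ((n : ℝ) + 1) ^ k := one_le_pow₀ (le_add_of_nonneg_left n.cast_nonneg)
  have : exp (((n : ℝ) + 1) * x) = exp x ^ (n + 1) := by
    rw [← Real.exp_nat_mul]; push_cast; ring_nf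
  rw [this]
  calc exp x ^ (n+1) / ((n : ℝ) + 1) ^ k ≤ exp x ^ (n+1) / 1 := by
        apply div_le_div_of_nonneg_left (by positivity) one_pos h1
    _ = _ := div_one _

lemma summable_exp_pow {x : ℝ} (hx : x < 0) : Summable (fun n : ℕ => exp x ^ (n + 1)) := by
  have h : exp x < 1 := by rwa [exp_lt_one_iff]
  have := (summable_geometric_of_lt_one (le_of_lt (exp_pos x)) h).mul_left (exp x)
  simpa [pow_succ, mul_comm] using this

lemma gk_summable (k : ℕ) {x : ℝ} (hx : x < 0) :
    Summable (fun n : ℕ => exp (((n : ℝ) + 1) * x) / ((n : ℝ) + 1) ^ k) :=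
  Summable.of_nonneg_of_le (fun n => by positivity) (fun n => gk_term_le n) (summable_exp_pow hx)

lemma term_hasDerivAt (k : ℕ) (n : ℕ) (x : ℝ) :
    HasDerivAt (fun y => exp (((n : ℝ) + 1) * y) / ((n : ℝ) + 1) ^ (k + 1))
      (exp (((n : ℝ) + 1) * x) / ((n : ℝ) + 1) ^ k) x := by
  have h : HasDerivAt (fun y => exp (((n : ℝ) + 1) * y))
      (exp (((n : ℝ) + 1) * x) * ((n : ℝ) + 1)) x :=
    (Real.hasDerivAt_exp _).comp x (by simpa using (hasDerivAt_id x).const_mul ((n : ℝ) + 1))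
  have := h.div_const (((n : ℝ) + 1) ^ (k + 1))
  refine this.congr_deriv ?_
  have hn : ((n : ℝ) + 1) ≠ 0 := by positivity
  field_simp [pow_succ]
  ring

lemma gk_hasDerivAt (k : ℕ) {x : ℝ} (hx : x < 0) :
    HasDerivAt (gk (k + 1)) (gk k x) x := by
  have hx2 : x < x / 2 := by linarith
  have hx20 : x / 2 < 0 := by linarith
  exact hasDerivAt_tsum_of_isPreconnected (summable_exp_pow hx20)
    isOpen_Iio (convex_Iio _).isPreconnected
    (fun n y _ => term_hasDerivAt k n y)
    (fun n y hy => by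
      have hy' : y < x / 2 := hy
      have h1 : exp (((n:ℝ)+1) * y) ≤ exp (((n:ℝ)+1) * (x/2)) := by
        apply exp_le_exp.2
        apply mul_le_mul_of_nonneg_left (le_of_lt hy') (by positivity)
      have : exp (((n:ℝ)+1) * y) / ((n:ℝ)+1) ^ k ≤ exp (((n:ℝ)+1) * (x/2)) / ((n:ℝ)+1) ^ k :=
        div_le_div_of_nonneg_right h1 (by positivity) |>.trans_eq rfl
      rw [Real.norm_eq_abs, abs_of_pos (by positivity)]
      exact this.trans (gk_term_le n))
    hx2 (gk_summable (k+1) hx) hx2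

lemma gk_zero_eq {x : ℝ} (hx : x < 0) : gk 0 x = exp x / (1 - exp x) := by
  have h : exp x < 1 := by rwa [exp_lt_one_iff]
  have h0 : (0:ℝ) ≤ exp x := (exp_pos x).le
  have : gk 0 x = ∑' n : ℕ, exp x * exp x ^ n := by
    unfold gk
    congr 1; funext n
    rw [pow_zero, div_one, ← pow_succ', ← Real.exp_nat_mul]
    push_cast; ring_nf
  rw [this, tsum_mul_left, tsum_geometric_of_lt_one h0 h]
  field_simp

lemma gk_deriv_eq (k : ℕ) {x : ℝ} (hx : x < 0) : deriv (gk (k+1)) x = gk k x :=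
  (gk_hasDerivAt k hx).deriv

lemma gk_diffOn (k : ℕ) : DifferentiableOn ℝ (gk (k+1)) (Set.Iio (0:ℝ)) :=
  fun x hx => ((gk_hasDerivAt k hx).differentiableAt).differentiableWithinAt

lemma gk_step {k : ℕ} {m : ℕ} (h : ContDiffOn ℝ m (gk k) (Set.Iio (0:ℝ))) :
    ContDiffOn ℝ (m+1) (gk (k+1)) (Set.Iio (0:ℝ)) := by
  rw [show ((m : WithTop ℕ∞) + 1) = ((m : ℕ∞) : WithTop ℕ∞) + 1 by norm_cast,
    contDiffOn_succ_iff_deriv_of_isOpen isOpen_Iio]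
  refine ⟨gk_diffOn k, fun h => (WithTop.coe_ne_top h).elim, ?_⟩
  exact h.congr (fun x hx => gk_deriv_eq k hx)

lemma gk_zero_contDiffOn : ContDiffOn ℝ 0 (gk 0) (Set.Iio (0:ℝ)) := by
  rw [contDiffOn_zero]
  apply ContinuousOn.congr (f := fun x => exp x / (1 - exp x))
  · apply Real.continuous_exp.continuousOn.div
      (continuousOn_const.sub Real.continuous_exp.continuousOn)
    intro x hx
    have : exp x < 1 := by rwa [exp_lt_one_iff]
    intro h; have h' : 1 - exp x = 0 := h; linarith
  · exact fun x hx => gk_zero_eq hx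

lemma gk_contDiffOn : ContDiffOn ℝ 3 (gk 3) (Set.Iio (0:ℝ)) := by
  have c1 := gk_step (m := 0) gk_zero_contDiffOn
  have c2 := gk_step (m := 1) (by exact_mod_cast c1)
  have c3 := gk_step (m := 2) (by exact_mod_cast c2)
  exact_mod_cast c3

/-- The prepotential of the trivalent toric graph geometry:
F(t₁,t₂,t₃) = (1/2)t₁t₂t₃ + ∑_{n≥1} (e^{nt₁}+e^{nt₂}+e^{nt₃}−e^{n(t₁+t₂)}
−e^{n(t₁+t₃)}−e^{n(t₂+t₃)}+e^{n(t₁+t₂+t₃)})/n³. -/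
noncomputable def trivalentPrepotential (t1 t2 t3 : ℝ) : ℝ :=
  (1 / 2) * t1 * t2 * t3 + ∑' n : ℕ,
    (exp (((n : ℝ) + 1) * t1) + exp (((n : ℝ) + 1) * t2) + exp (((n : ℝ) + 1) * t3)
      - exp (((n : ℝ) + 1) * (t1 + t2)) - exp (((n : ℝ) + 1) * (t1 + t3))
      - exp (((n : ℝ) + 1) * (t2 + t3)) + exp (((n : ℝ) + 1) * (t1 + t2 + t3)))
      / ((n : ℝ) + 1) ^ 3

lemma prepot_closed {t1 t2 t3 : ℝ} (h1 : t1 < 0) (h2 : t2 < 0) (h3 : t3 < 0) :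
    trivalentPrepotential t1 t2 t3 = (1 / 2) * t1 * t2 * t3
      + gk 3 t1 + gk 3 t2 + gk 3 t3 - gk 3 (t1 + t2) - gk 3 (t1 + t3) - gk 3 (t2 + t3)
      + gk 3 (t1 + t2 + t3) := by
  have s1 := gk_summable 3 h1
  have s2 := gk_summable 3 h2
  have s3 := gk_summable 3 h3
  have s12 := gk_summable 3 (show t1 + t2 < 0 by linarith)
  have s13 := gk_summable 3 (show t1 + t3 < 0 by linarith)
  have s23 := gk_summable 3 (show t2 + t3 < 0 by linarith)
  have s123 := gk_summable 3 (show t1 + t2 + t3 < 0 by linarith)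
  unfold trivalentPrepotential gk
  have heq : (fun n : ℕ =>
    (exp (((n : ℝ) + 1) * t1) + exp (((n : ℝ) + 1) * t2) + exp (((n : ℝ) + 1) * t3)
      - exp (((n : ℝ) + 1) * (t1 + t2)) - exp (((n : ℝ) + 1) * (t1 + t3))
      - exp (((n : ℝ) + 1) * (t2 + t3)) + exp (((n : ℝ) + 1) * (t1 + t2 + t3)))
      / ((n : ℝ) + 1) ^ 3) = (fun n : ℕ =>
    ((((((exp (((n : ℝ) + 1) * t1) / ((n : ℝ) + 1) ^ 3
      + exp (((n : ℝ) + 1) * t2) / ((n : ℝ) + 1) ^ 3)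
      + exp (((n : ℝ) + 1) * t3) / ((n : ℝ) + 1) ^ 3)
      - exp (((n : ℝ) + 1) * (t1 + t2)) / ((n : ℝ) + 1) ^ 3)
      - exp (((n : ℝ) + 1) * (t1 + t3)) / ((n : ℝ) + 1) ^ 3)
      - exp (((n : ℝ) + 1) * (t2 + t3)) / ((n : ℝ) + 1) ^ 3)
      + exp (((n : ℝ) + 1) * (t1 + t2 + t3)) / ((n : ℝ) + 1) ^ 3)) := funext fun n => by ring
  rw [heq]
  rw [Summable.tsum_add (by exact ((((s1.add s2).add s3).sub s12).sub s13).sub s23) s123,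
    Summable.tsum_sub (by exact (((s1.add s2).add s3).sub s12).sub s13) s23,
    Summable.tsum_sub (by exact ((s1.add s2).add s3).sub s12) s13,
    Summable.tsum_sub (by exact (s1.add s2).add s3) s12,
    Summable.tsum_add (by exact s1.add s2) s3, Summable.tsum_add s1 s2]
  ring

lemma gk_shift_hasDerivAt (k : ℕ) {s c : ℝ} (h : s + c < 0) :
    HasDerivAt (fun s => gk (k + 1) (s + c)) (gk k (s + c)) s := by
  simpa [Function.comp_def] using (gk_hasDerivAt k h).comp s ((hasDerivAt_id s).add_const c)

lemma ev_eq {s : ℝ} (hs : s < 0) {f g : ℝ → ℝ} (h : ∀ x < (0:ℝ), f x = g x) :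
    f =ᶠ[nhds s] g :=
  Filter.eventuallyEq_of_mem (Iio_mem_nhds hs) h

noncomputable def P1 (t2 t3 s : ℝ) : ℝ :=
  1/2*t2*t3 + gk 2 s - gk 2 (s+t2) - gk 2 (s+t3) + gk 2 (s+t2+t3)
noncomputable def P2 (t2 t3 s : ℝ) : ℝ :=
  gk 1 s - gk 1 (s+t2) - gk 1 (s+t3) + gk 1 (s+t2+t3)
noncomputable def P3 (t2 t3 s : ℝ) : ℝ :=
  gk 0 s - gk 0 (s+t2) - gk 0 (s+t3) + gk 0 (s+t2+t3)

lemma lemA {t2 t3 : ℝ} (h2 : t2 < 0) (h3 : t3 < 0) {s : ℝ} (hs : s < 0) :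
    HasDerivAt (fun s => trivalentPrepotential s t2 t3) (P1 t2 t3 s) s := by
  have hc : HasDerivAt (fun s => (1 / 2) * s * t2 * t3
      + gk 3 s + gk 3 t2 + gk 3 t3 - gk 3 (s + t2) - gk 3 (s + t3) - gk 3 (t2 + t3)
      + gk 3 (s + t2 + t3)) (P1 t2 t3 s) s := by
    have e1 : HasDerivAt (fun s : ℝ => (1/2) * s * t2 * t3) (1/2*t2*t3) s := by
      simpa [mul_assoc, mul_comm, mul_left_comm] using
        ((hasDerivAt_id s).const_mul ((1:ℝ)/2*t2*t3))
    have d1 := gk_hasDerivAt 2 hs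
    have d2 := gk_shift_hasDerivAt 2 (show s + t2 < 0 by linarith)
    have d3 := gk_shift_hasDerivAt 2 (show s + t3 < 0 by linarith)
    have d4 : HasDerivAt (fun s => gk 3 (s + t2 + t3)) (gk 2 (s + t2 + t3)) s := by
      simpa [add_assoc] using gk_shift_hasDerivAt 2 (c := t2 + t3)
        (show s + (t2 + t3) < 0 by linarith)
    have := ((((((e1.add d1).add_const (gk 3 t2)).add_const (gk 3 t3)).sub d2).sub
      d3).sub_const (gk 3 (t2 + t3))).add d4
    exact this
  exact hc.congr_of_eventuallyEq (ev_eq hs fun x hx => prepot_closed hx h2 h3)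

lemma lemB {t2 t3 : ℝ} (h2 : t2 < 0) (h3 : t3 < 0) {s : ℝ} (hs : s < 0) :
    deriv (fun s => trivalentPrepotential s t2 t3) s = P1 t2 t3 s :=
  (lemA h2 h3 hs).deriv

lemma P1_hasDerivAt {t2 t3 : ℝ} (h2 : t2 < 0) (h3 : t3 < 0) {s : ℝ} (hs : s < 0) :
    HasDerivAt (P1 t2 t3) (P2 t2 t3 s) s := by
  have d1 := gk_hasDerivAt 1 hs
  have d2 := gk_shift_hasDerivAt 1 (show s + t2 < 0 by linarith)
  have d3 := gk_shift_hasDerivAt 1 (show s + t3 < 0 by linarith)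
  have d4 : HasDerivAt (fun s => gk 2 (s + t2 + t3)) (gk 1 (s + t2 + t3)) s := by
    simpa [add_assoc] using gk_shift_hasDerivAt 1 (c := t2 + t3)
      (show s + (t2 + t3) < 0 by linarith)
  have := ((((hasDerivAt_const s (1/2*t2*t3)).add d1).sub d2).sub d3).add d4
  exact this.congr_deriv (by unfold P2; ring)

lemma P2_hasDerivAt {t2 t3 : ℝ} (h2 : t2 < 0) (h3 : t3 < 0) {s : ℝ} (hs : s < 0) :
    HasDerivAt (P2 t2 t3) (P3 t2 t3 s) s := by
  have d1 := gk_hasDerivAt 0 hs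
  have d2 := gk_shift_hasDerivAt 0 (show s + t2 < 0 by linarith)
  have d3 := gk_shift_hasDerivAt 0 (show s + t3 < 0 by linarith)
  have d4 : HasDerivAt (fun s => gk 1 (s + t2 + t3)) (gk 0 (s + t2 + t3)) s := by
    simpa [add_assoc] using gk_shift_hasDerivAt 0 (c := t2 + t3)
      (show s + (t2 + t3) < 0 by linarith)
  have := ((d1.sub d2).sub d3).add d4
  exact this

lemma lemC {t2 t3 : ℝ} (h2 : t2 < 0) (h3 : t3 < 0) {s : ℝ} (hs : s < 0) :
    deriv (deriv (fun s => trivalentPrepotential s t2 t3)) s = P2 t2 t3 s := by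
  have : deriv (fun s => trivalentPrepotential s t2 t3) =ᶠ[nhds s] P1 t2 t3 :=
    ev_eq hs fun x hx => lemB h2 h3 hx
  rw [this.deriv_eq]
  exact (P1_hasDerivAt h2 h3 hs).deriv

lemma lemD {t2 t3 : ℝ} (h2 : t2 < 0) (h3 : t3 < 0) {s : ℝ} (hs : s < 0) :
    deriv (deriv (deriv (fun s => trivalentPrepotential s t2 t3))) s = P3 t2 t3 s := by
  have : deriv (deriv (fun s => trivalentPrepotential s t2 t3)) =ᶠ[nhds s] P2 t2 t3 :=
    ev_eq hs fun x hx => lemC h2 h3 hx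
  rw [this.deriv_eq]
  exact (P2_hasDerivAt h2 h3 hs).deriv

lemma gk_shift_hasDerivAt' (k : ℕ) {s c : ℝ} (h : c + s < 0) :
    HasDerivAt (fun s => gk (k + 1) (c + s)) (gk k (c + s)) s := by
  simpa [Function.comp_def] using (gk_hasDerivAt k h).comp s ((hasDerivAt_id s).const_add c)

lemma y112 {t1 t2 t3 : ℝ} (h1 : t1 < 0) (h2 : t2 < 0) (h3 : t3 < 0) :
    deriv (fun u => deriv^[2] (fun s => trivalentPrepotential s u t3) t1) t2 =
      -exp (t1 + t2) / (1 - exp (t1 + t2))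
        + exp (t1 + t2 + t3) / (1 - exp (t1 + t2 + t3)) := by
  have key : ∀ u < (0:ℝ), deriv^[2] (fun s => trivalentPrepotential s u t3) t1
      = gk 1 t1 - gk 1 (t1 + u) - gk 1 (t1 + t3) + gk 1 (t1 + u + t3) := by
    intro u hu
    have := lemC hu h3 h1
    simp only [Function.iterate_succ, Function.iterate_zero, Function.comp_apply, id_eq]
    rw [this]; unfold P2; ring_nf
  have hev := ev_eq h2 key
  rw [hev.deriv_eq]
  have d2 : HasDerivAt (fun u => gk 1 (t1 + u)) (gk 0 (t1 + t2)) t2 :=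
    gk_shift_hasDerivAt' 0 (show t1 + t2 < 0 by linarith)
  have d4 : HasDerivAt (fun u => gk 1 (t1 + u + t3)) (gk 0 (t1 + t2 + t3)) t2 := by
    have : HasDerivAt (fun u : ℝ => t1 + u + t3) 1 t2 := by
      simpa using ((hasDerivAt_id t2).const_add t1).add_const t3
    simpa [Function.comp_def] using (gk_hasDerivAt 0 (show t1 + t2 + t3 < 0 by linarith)).comp t2 this
  have hd := (((hasDerivAt_const t2 (gk 1 t1)).sub d2).sub_const (gk 1 (t1 + t3))).add d4
  erw [hd.deriv, gk_zero_eq (show t1 + t2 < 0 by linarith),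
    gk_zero_eq (show t1 + t2 + t3 < 0 by linarith)]
  ring

lemma y123 {t1 t2 t3 : ℝ} (h1 : t1 < 0) (h2 : t2 < 0) (h3 : t3 < 0) :
    deriv (fun w => deriv (fun u => deriv
        (fun s => trivalentPrepotential s u w) t1) t2) t3 =
      1 / 2 + exp (t1 + t2 + t3) / (1 - exp (t1 + t2 + t3)) := by
  have key : ∀ w < (0:ℝ), deriv (fun u => deriv (fun s => trivalentPrepotential s u w) t1) t2
      = 1/2*w - gk 1 (t1 + t2) + gk 1 (t1 + t2 + w) := by
    intro w hw
    have inner : ∀ u < (0:ℝ), deriv (fun s => trivalentPrepotential s u w) t1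
        = 1/2*u*w + gk 2 t1 - gk 2 (t1 + u) - gk 2 (t1 + w) + gk 2 (t1 + u + w) := by
      intro u hu
      rw [lemB hu hw h1]; unfold P1; ring_nf
    rw [(ev_eq h2 inner).deriv_eq]
    have e1 : HasDerivAt (fun u : ℝ => 1/2*u*w) (1/2*w) t2 := by
      simpa [mul_comm, mul_assoc, mul_left_comm] using (hasDerivAt_id t2).const_mul (1/2*w)
    have d2 : HasDerivAt (fun u => gk 2 (t1 + u)) (gk 1 (t1 + t2)) t2 :=
      gk_shift_hasDerivAt' 1 (show t1 + t2 < 0 by linarith)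
    have d4 : HasDerivAt (fun u => gk 2 (t1 + u + w)) (gk 1 (t1 + t2 + w)) t2 := by
      have h : HasDerivAt (fun u : ℝ => t1 + u + w) 1 t2 := by
        simpa using ((hasDerivAt_id t2).const_add t1).add_const w
      simpa [Function.comp_def] using (gk_hasDerivAt 1 (show t1 + t2 + w < 0 by linarith)).comp t2 h
    have hd := ((((e1.add_const (gk 2 t1)).sub d2).sub_const (gk 2 (t1 + w))).add d4)
    have := hd.deriv
    erw [show (fun u : ℝ => 1/2*u*w + gk 2 t1 - gk 2 (t1 + u) - gk 2 (t1 + w) + gk 2 (t1 + u + w))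
      = (fun u : ℝ => (((1/2*u*w + gk 2 t1) - gk 2 (t1 + u)) - gk 2 (t1 + w)) + gk 2 (t1 + u + w))
      from rfl, this]
  rw [(ev_eq h3 key).deriv_eq]
  have e1 : HasDerivAt (fun w : ℝ => 1/2*w) (1/2 : ℝ) t3 := by
    simpa using (hasDerivAt_id t3).const_mul (1/2 : ℝ)
  have d4 : HasDerivAt (fun w => gk 1 (t1 + t2 + w)) (gk 0 (t1 + t2 + t3)) t3 :=
    gk_shift_hasDerivAt' 0 (show t1 + t2 + t3 < 0 by linarith)
  have hd := (e1.sub_const (gk 1 (t1 + t2))).add d4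
  erw [hd.deriv, gk_zero_eq (show t1 + t2 + t3 < 0 by linarith)]

lemma prepot_contDiffOn : ContDiffOn ℝ 3
    (fun p : ℝ × ℝ × ℝ => trivalentPrepotential p.1 p.2.1 p.2.2)
    (Set.Iio 0 ×ˢ Set.Iio 0 ×ˢ Set.Iio 0) := by
  set s : Set (ℝ × ℝ × ℝ) := Set.Iio 0 ×ˢ Set.Iio 0 ×ˢ Set.Iio 0 with hs
  have mem1 : ∀ p ∈ s, p.1 < 0 := fun p hp => hp.1
  have mem2 : ∀ p ∈ s, p.2.1 < 0 := fun p hp => hp.2.1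
  have mem3 : ∀ p ∈ s, p.2.2 < 0 := fun p hp => hp.2.2
  have comp : ∀ f : ℝ × ℝ × ℝ → ℝ, ContDiff ℝ 3 f → (∀ p ∈ s, f p < 0) →
      ContDiffOn ℝ 3 (fun p => gk 3 (f p)) s := fun f hf hm =>
    gk_contDiffOn.comp hf.contDiffOn (fun p hp => Set.mem_Iio.2 (hm p hp))
  have cf1 : ContDiff ℝ 3 (fun p : ℝ × ℝ × ℝ => p.1) := contDiff_fst
  have cf2 : ContDiff ℝ 3 (fun p : ℝ × ℝ × ℝ => p.2.1) := contDiff_fst.comp contDiff_snd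
  have cf3 : ContDiff ℝ 3 (fun p : ℝ × ℝ × ℝ => p.2.2) := contDiff_snd.comp contDiff_snd
  have c1 := comp _ cf1 mem1
  have c2 := comp _ cf2 mem2
  have c3 := comp _ cf3 mem3
  have c12 := comp _ (cf1.add cf2) (fun p hp => by have := mem1 p hp; have := mem2 p hp; linarith)
  have c13 := comp _ (cf1.add cf3) (fun p hp => by have := mem1 p hp; have := mem3 p hp; linarith)
  have c23 := comp _ (cf2.add cf3) (fun p hp => by have := mem2 p hp; have := mem3 p hp; linarith)
  have c123 := comp _ ((cf1.add cf2).add cf3) (fun p hp => by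
    have := mem1 p hp; have := mem2 p hp; have := mem3 p hp; linarith)
  have cpoly : ContDiffOn ℝ 3 (fun p : ℝ × ℝ × ℝ => (1/2) * p.1 * p.2.1 * p.2.2) s :=
    (((contDiff_const.mul cf1).mul cf2).mul cf3).contDiffOn
  have total := ((((((cpoly.add c1).add c2).add c3).sub c12).sub c13).sub c23).add c123
  exact total.congr (fun p hp =>
    prepot_closed (mem1 p hp) (mem2 p hp) (mem3 p hp))

/-- The series defining the trivalent prepotential converges on (−∞,0)³, the
prepotential is C³ there, and its third partial derivatives are the A-model
Yukawa couplings Y₁₁₁, Y₁₁₂, Y₁₂₃ of the trivalent toric graph. -/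
theorem trivalent_prepotential_yukawa :
    (∀ t1 t2 t3 : ℝ, t1 < 0 → t2 < 0 → t3 < 0 →
      Summable fun n : ℕ =>
        (exp (((n : ℝ) + 1) * t1) + exp (((n : ℝ) + 1) * t2) + exp (((n : ℝ) + 1) * t3)
          - exp (((n : ℝ) + 1) * (t1 + t2)) - exp (((n : ℝ) + 1) * (t1 + t3))
          - exp (((n : ℝ) + 1) * (t2 + t3)) + exp (((n : ℝ) + 1) * (t1 + t2 + t3)))
          / ((n : ℝ) + 1) ^ 3) ∧
    ContDiffOn ℝ 3 (fun p : ℝ × ℝ × ℝ => trivalentPrepotential p.1 p.2.1 p.2.2)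
      (Set.Iio 0 ×ˢ Set.Iio 0 ×ˢ Set.Iio 0) ∧
    (∀ t1 t2 t3 : ℝ, t1 < 0 → t2 < 0 → t3 < 0 →
      deriv^[3] (fun s => trivalentPrepotential s t2 t3) t1 =
        exp t1 / (1 - exp t1) - exp (t1 + t2) / (1 - exp (t1 + t2))
          - exp (t1 + t3) / (1 - exp (t1 + t3))
          + exp (t1 + t2 + t3) / (1 - exp (t1 + t2 + t3))) ∧
    (∀ t1 t2 t3 : ℝ, t1 < 0 → t2 < 0 → t3 < 0 →
      deriv (fun u => deriv^[2] (fun s => trivalentPrepotential s u t3) t1) t2 =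
        -exp (t1 + t2) / (1 - exp (t1 + t2))
          + exp (t1 + t2 + t3) / (1 - exp (t1 + t2 + t3))) ∧
    (∀ t1 t2 t3 : ℝ, t1 < 0 → t2 < 0 → t3 < 0 →
      deriv (fun w => deriv (fun u => deriv
          (fun s => trivalentPrepotential s u w) t1) t2) t3 =
        1 / 2 + exp (t1 + t2 + t3) / (1 - exp (t1 + t2 + t3))) := by
  refine ⟨?_, prepot_contDiffOn, ?_, fun t1 t2 t3 h1 h2 h3 => y112 h1 h2 h3,
    fun t1 t2 t3 h1 h2 h3 => y123 h1 h2 h3⟩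
  · intro t1 t2 t3 h1 h2 h3
    have s1 := gk_summable 3 h1
    have s2 := gk_summable 3 h2
    have s3 := gk_summable 3 h3
    have s12 := gk_summable 3 (show t1 + t2 < 0 by linarith)
    have s13 := gk_summable 3 (show t1 + t3 < 0 by linarith)
    have s23 := gk_summable 3 (show t2 + t3 < 0 by linarith)
    have s123 := gk_summable 3 (show t1 + t2 + t3 < 0 by linarith)
    exact ((((((s1.add s2).add s3).sub s12).sub s13).sub s23).add s123).congr
      (fun n => by ring)
  · intro t1 t2 t3 h1 h2 h3
    have : deriv^[3] (fun s => trivalentPrepotential s t2 t3) t1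
        = deriv (deriv (deriv (fun s => trivalentPrepotential s t2 t3))) t1 := by
      simp only [Function.iterate_succ, Function.iterate_zero, Function.comp_apply, id_eq]
    rw [this, lemD h2 h3 h1]
    unfold P3
    rw [gk_zero_eq h1, gk_zero_eq (show t1 + t2 < 0 by linarith),
      gk_zero_eq (show t1 + t3 < 0 by linarith),
      gk_zero_eq (show t1 + t2 + t3 < 0 by linarith)]
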